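/- Let H = Σ_P c_P P be a Hermitian operator on N qubits expanded in the Pauli basis with c_I = 0 and all c_P real. Suppose P₁, …, P_m are nonidentity Pauli strings with c_{P_j} ≠ 0 whose supports A_j := supp(P_j) are pairwise disjoint, and suppose that every Pauli string P with c_P ≠ 0 and supp(P) ⊆ A₁ ∪ ⋯ ∪ A_m is equal to one of P₁, …, P_m. Then there exists a product state |ψ⟩ ∈ S with ⟨ψ|H|ψ⟩ ≤ −Σ_{j=1}^m |c_{P_j}|. -/

import Mathlib

open scoped Matrix ComplexConjugate

/-- The six single-qubit states `|x^±⟩, |y^±⟩, |z^±⟩`: unit eigenvectors of the Pauli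
matrices `σˣ, σʸ, σᶻ` with eigenvalues `±1`. -/
noncomputable def qs : Fin 6 → Fin 2 → ℂ
  | 0 => ![(Real.sqrt 2 : ℂ)⁻¹, (Real.sqrt 2 : ℂ)⁻¹]
  | 1 => ![(Real.sqrt 2 : ℂ)⁻¹, -(Real.sqrt 2 : ℂ)⁻¹]
  | 2 => ![(Real.sqrt 2 : ℂ)⁻¹, Complex.I * (Real.sqrt 2 : ℂ)⁻¹]
  | 3 => ![(Real.sqrt 2 : ℂ)⁻¹, -(Complex.I * (Real.sqrt 2 : ℂ)⁻¹)]
  | 4 => ![1, 0]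
  | 5 => ![0, 1]

/-- The product state `⊗_i |f i⟩ ∈ (ℂ²)^{⊗N}`; as `f` ranges over `Fin N → Fin 6`,
these are exactly the `6^N` elements of `S`. -/
noncomputable def prodState {N : ℕ} (f : Fin N → Fin 6) : (Fin N → Fin 2) → ℂ :=
  fun x => ∏ i, qs (f i) (x i)


/-- The single-qubit Pauli matrices `I₂, σˣ, σʸ, σᶻ`. -/
noncomputable def pauli : Fin 4 → Matrix (Fin 2) (Fin 2) ℂ
  | 0 => 1
  | 1 => !![0, 1; 1, 0]
  | 2 => !![0, -Complex.I; Complex.I, 0]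
  | 3 => !![1, 0; 0, -1]

/-- The `N`-qubit Pauli string `⊗_i pauli (P i)` determined by `P : Fin N → Fin 4`;
its support is the set of qubits `i` with `P i ≠ 0`. -/
noncomputable def pauliStr {N : ℕ} (P : Fin N → Fin 4) :
    Matrix (Fin N → Fin 2) (Fin N → Fin 2) ℂ :=
  Matrix.of fun x y => ∏ i, pauli (P i) (x i) (y i)

/-! ### Auxiliary material -/

/-- Table of single-qubit Pauli expectation values: `tbl s a = ⟨qs s| pauli a |qs s⟩`. -/
def tbl : Fin 6 → Fin 4 → ℝ
  | _, 0 => 1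
  | 0, 1 => 1
  | 1, 1 => -1
  | 2, 2 => 1
  | 3, 2 => -1
  | 4, 3 => 1
  | 5, 3 => -1
  | _, _ => 0

/-- Eigenvector selector: `ev a b` is the eigenstate of `pauli a` (z-axis if `a = 0`)
with eigenvalue `+1` if `b = true` and `-1` if `b = false`. -/
def ev : Fin 4 → Bool → Fin 6
  | 1, true => 0
  | 1, false => 1
  | 2, true => 2
  | 2, false => 3
  | _, true => 4
  | _, false => 5

lemma tbl_zero (s : Fin 6) : tbl s 0 = 1 := by fin_cases s <;> simp [tbl]

lemma tbl_ev (a : Fin 4) (ha : a ≠ 0) (b : Bool) :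
    tbl (ev a b) a = if b then 1 else -1 := by
  fin_cases a
  · exact absurd rfl ha
  all_goals cases b <;> simp [tbl, ev]

lemma tbl_free_sum (a : Fin 4) (ha : a ≠ 0) :
    tbl (ev 0 true) a + tbl (ev 0 false) a = 0 := by
  fin_cases a
  · exact absurd rfl ha
  all_goals simp [tbl, ev]

lemma sqrt2_sq : ((Real.sqrt 2 : ℂ))⁻¹ * ((Real.sqrt 2 : ℂ))⁻¹ = (2:ℂ)⁻¹ := by
  rw [← mul_inv]
  norm_cast
  rw [Real.mul_self_sqrt (by norm_num)]
  norm_num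

set_option maxHeartbeats 1000000 in
lemma expect_single (s : Fin 6) (a : Fin 4) :
    star (qs s) ⬝ᵥ (pauli a).mulVec (qs s) = ((tbl s a : ℝ) : ℂ) := by
  fin_cases s <;> fin_cases a <;>
    simp only [qs, pauli, tbl, Matrix.mulVec, dotProduct, Fin.sum_univ_two,
      Matrix.one_apply, Pi.star_apply, RCLike.star_def, map_inv₀, Complex.conj_ofReal, map_one,
      map_zero, map_neg, map_mul, Complex.conj_I, Matrix.cons_val_zero, Matrix.cons_val_one,
      Matrix.head_cons, Matrix.cons_val', Matrix.empty_val', Matrix.cons_val_fin_one,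
      Matrix.of_apply, Matrix.head_fin_const, Complex.ofReal_one, Complex.ofReal_zero,
      Complex.ofReal_neg, if_true, if_false] <;>
    norm_num <;>
    ring_nf <;>
    simp [sqrt2_sq, Complex.ext_iff] <;> ring_nf <;>
    norm_num [← Complex.ofReal_pow, Real.sq_sqrt]

lemma prod_expect {N : ℕ} (g : Fin N → (Fin 2 → ℂ)) (M : Fin N → Matrix (Fin 2) (Fin 2) ℂ) :
    star (fun x : Fin N → Fin 2 => ∏ i, g i (x i)) ⬝ᵥ
      (Matrix.of fun x y : Fin N → Fin 2 => ∏ i, M i (x i) (y i)).mulVec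
        (fun x => ∏ i, g i (x i))
    = ∏ i, star (g i) ⬝ᵥ (M i).mulVec (g i) := by
  classical
  have key : ∀ (v w : Fin N → (Fin 2 → ℂ)),
      (∏ i, ∑ a, v i a * w i a) = ∑ x : Fin N → Fin 2, ∏ i, v i (x i) * w i (x i) := by
    intro v w
    rw [Finset.prod_univ_sum (fun _ => (Finset.univ : Finset (Fin 2)))
      (fun i a => v i a * w i a)]
    rw [Fintype.piFinset_univ]
  symm
  calc ∏ i, star (g i) ⬝ᵥ (M i).mulVec (g i)
      = ∏ i, ∑ a, (star (g i)) a * ((M i).mulVec (g i)) a := rfl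
    _ = ∑ x : Fin N → Fin 2, ∏ i, (star (g i)) (x i) * ((M i).mulVec (g i)) (x i) :=
        key _ _
    _ = _ := by
        simp only [dotProduct, Matrix.mulVec, Pi.star_apply, Matrix.of_apply]
        refine Finset.sum_congr rfl fun x _ => ?_
        rw [Finset.prod_mul_distrib]
        congr 1
        · exact (star_prod _ _).symm
        · have := key (fun i b => M i (x i) b) (fun i b => g i b)
          rw [this]
          refine Finset.sum_congr rfl fun y _ => ?_
          rw [Finset.prod_mul_distrib]

lemma sum_bool_prod {N : ℕ} (t : Fin N → Bool → ℝ) :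
    ∑ ε : Fin N → Bool, ∏ i, t i (ε i) = ∏ i, (t i true + t i false) := by
  classical
  have : ∀ i, t i true + t i false = ∑ b : Bool, t i b := by
    intro i; rw [Fintype.sum_bool]
  simp_rw [this]
  rw [Finset.prod_univ_sum (fun _ => (Finset.univ : Finset Bool)) (fun i b => t i b),
    Fintype.piFinset_univ]

/-- Let `H = Σ_P c_P P` be a Hermitian operator on `N` qubits expanded in the Pauli basis
with `c_I = 0` and all `c_P` real. If `P₁, …, P_m` are nonidentity Pauli strings with
`c_{P_j} ≠ 0`, pairwise disjoint supports, and such that every Pauli string `P` with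
`c_P ≠ 0` and `supp(P) ⊆ A₁ ∪ ⋯ ∪ A_m` equals some `P_j`, then there is a product state
`|ψ⟩ ∈ S` with `⟨ψ|H|ψ⟩ ≤ −Σ_j |c_{P_j}|`. -/
theorem exists_product_state_low_energy (N m : ℕ)
    (c : (Fin N → Fin 4) → ℝ) (hcI : c (fun _ => 0) = 0)
    (P : Fin m → (Fin N → Fin 4))
    (hPne : ∀ j, P j ≠ fun _ => 0)
    (hcP : ∀ j, c (P j) ≠ 0)
    (hdisj : ∀ j k, j ≠ k → ∀ i, P j i = 0 ∨ P k i = 0)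
    (hclosed : ∀ Q : Fin N → Fin 4, c Q ≠ 0 →
      (∀ i, Q i ≠ 0 → ∃ j, P j i ≠ 0) → ∃ j, Q = P j) :
    ∃ f : Fin N → Fin 6,
      (star (prodState f) ⬝ᵥ
          (∑ Q : Fin N → Fin 4, (c Q : ℂ) • pauliStr Q).mulVec (prodState f)).re
        ≤ -∑ j, |c (P j)| := by
  classical
  -- distinguished qubit in the support of each `P j`
  choose i0 hi0 using fun j => Function.ne_iff.mp (hPne j)
  -- the owner of a supported qubit is unique
  have huniq : ∀ (i : Fin N) (j k : Fin m), P j i ≠ 0 → P k i ≠ 0 → j = k := by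
    intro i j k hj hk
    by_contra hne
    rcases hdisj j k hne i with h | h
    · exact hj h
    · exact hk h
  -- per-qubit state choice, parametrized by a sign `b` that only matters on free qubits
  set g : Fin N → Bool → Fin 6 := fun i b =>
    if h : ∃ j, P j i ≠ 0 then
      (if i = i0 h.choose then ev (P h.choose i) (decide (c (P h.choose) < 0))
       else ev (P h.choose i) true)
    else ev 0 b with hg
  -- the (real) energy functional of a product state
  set E : (Fin N → Fin 6) → ℝ := fun f => ∑ Q, c Q * ∏ i, tbl (f i) (Q i) with hE
  -- Step A: the quantum expectation value of a product state equals `E f`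
  have bridge : ∀ f : Fin N → Fin 6,
      (star (prodState f) ⬝ᵥ
        (∑ Q : Fin N → Fin 4, (c Q : ℂ) • pauliStr Q).mulVec (prodState f)).re = E f := by
    intro f
    have lin : ∀ (s : Finset (Fin N → Fin 4)),
        star (prodState f) ⬝ᵥ (∑ Q ∈ s, (c Q : ℂ) • pauliStr Q).mulVec (prodState f)
          = ∑ Q ∈ s, (c Q : ℂ) * (star (prodState f) ⬝ᵥ (pauliStr Q).mulVec (prodState f)) := by
      intro s
      induction s using Finset.induction with
      | empty => simp [Matrix.zero_mulVec, dotProduct_zero]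
      | insert _ _ hns ih =>
          rw [Finset.sum_insert hns, Finset.sum_insert hns, Matrix.add_mulVec,
            dotProduct_add, ih, Matrix.smul_mulVec, dotProduct_smul,
            smul_eq_mul]
    rw [lin]
    have hterm : ∀ Q : Fin N → Fin 4,
        star (prodState f) ⬝ᵥ (pauliStr Q).mulVec (prodState f)
          = ((∏ i, tbl (f i) (Q i) : ℝ) : ℂ) := by
      intro Q
      have := prod_expect (fun i => qs (f i)) (fun i => pauli (Q i))
      rw [show prodState f = fun x => ∏ i, qs (f i) (x i) from rfl, pauliStr, this]
      rw [Complex.ofReal_prod]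
      exact Finset.prod_congr rfl fun i _ => expect_single (f i) (Q i)
    simp only [hterm, hE]
    rw [Complex.re_sum]
    refine Finset.sum_congr rfl fun Q _ => ?_
    rw [← Complex.ofReal_mul, Complex.ofReal_re]
  -- the summed single-qubit factor
  set S : (Fin N → Fin 4) → Fin N → ℝ :=
    fun Q i => tbl (g i true) (Q i) + tbl (g i false) (Q i) with hS
  -- Step B: sum over all sign choices
  have swap : ∑ ε : Fin N → Bool, E (fun i => g i (ε i))
      = ∑ Q, c Q * ∏ i, S Q i := by
    rw [Finset.sum_comm]
    refine Finset.sum_congr rfl fun Q _ => ?_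
    rw [← Finset.mul_sum, sum_bool_prod (fun i b => tbl (g i b) (Q i))]
  -- facts about `S`
  have hS_free : ∀ (Q : Fin N → Fin 4) (i : Fin N), ¬(∃ j, P j i ≠ 0) →
      S Q i = if Q i = 0 then 2 else 0 := by
    intro Q i h
    have hgi : ∀ b, g i b = ev 0 b := by intro b; simp [hg, h]
    rw [hS]
    simp only [hgi]
    by_cases hQ : Q i = 0
    · rw [hQ, tbl_zero, tbl_zero]; norm_num
    · rw [tbl_free_sum _ hQ, if_neg hQ]
  have hS_owned : ∀ (Q : Fin N → Fin 4) (i : Fin N) (h : ∃ j, P j i ≠ 0),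
      S Q i = 2 * tbl (g i true) (Q i) := by
    intro Q i h
    have hfb : g i false = g i true := by simp [hg, h]
    show tbl (g i true) (Q i) + tbl (g i false) (Q i) = 2 * tbl (g i true) (Q i)
    rw [hfb]; ring
  -- Step C: compute the product for `Q = P j`
  have hsign : ∀ j, c (P j) * (if decide (c (P j) < 0) = true then (1:ℝ) else -1)
      = -|c (P j)| := by
    intro j
    rcases lt_or_gt_of_ne (hcP j) with h | h
    · simp [h, abs_of_neg h]
    · simp [not_lt.mpr h.le, abs_of_pos h, not_lt_of_gt h]
  have howner : ∀ (i : Fin N) (j : Fin m) (hj : P j i ≠ 0),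
      (⟨j, hj⟩ : ∃ k, P k i ≠ 0).choose = j := by
    intro i j hj
    exact huniq i _ j (⟨j, hj⟩ : ∃ k, P k i ≠ 0).choose_spec hj
  have hprodj : ∀ j, ∏ i, S (P j) i
      = 2 ^ N * (if decide (c (P j) < 0) = true then (1:ℝ) else -1) := by
    intro j
    have hfac : ∀ i, S (P j) i
        = 2 * (if i = i0 j then (if decide (c (P j) < 0) = true then (1:ℝ) else -1) else 1) := by
      intro i
      by_cases h : ∃ k, P k i ≠ 0
      · -- owned qubit
        obtain ⟨k, hk⟩ := h
        have hex : ∃ k, P k i ≠ 0 := ⟨k, hk⟩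
        have hch : hex.choose = k := huniq i hex.choose k hex.choose_spec hk
        have hgt : g i true = (if i = i0 hex.choose
            then ev (P hex.choose i) (decide (c (P hex.choose) < 0))
            else ev (P hex.choose i) true) := by
          simp only [hg]
          rw [dif_pos hex]
        by_cases hji : P j i = 0
        · -- owned by someone else; in particular `i ≠ i0 j`
          have hij : i ≠ i0 j := by
            intro hEq; rw [hEq] at hji; exact hi0 j hji
          rw [hS_owned _ _ hex, if_neg hij, hgt, hji]
          split <;> rw [tbl_zero] <;> norm_num
        · -- owned by `j`
          have hkj : k = j := huniq i k j hk hji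
          subst hkj
          rw [hS_owned _ _ hex, hgt, hch]
          by_cases hii : i = i0 k
          · rw [if_pos hii, if_pos hii, tbl_ev _ hji]
          · rw [if_neg hii, if_neg hii, tbl_ev _ hji]
            norm_num
      · -- free qubit: `P j i = 0` and `i ≠ i0 j`
        have hji : P j i = 0 := by
          by_contra hne; exact h ⟨j, hne⟩
        have hij : i ≠ i0 j := by
          intro hEq; rw [hEq] at hji; exact hi0 j hji
        rw [hS_free _ _ h, if_pos hji, if_neg hij]
        norm_num
    calc ∏ i, S (P j) i
        = ∏ i, 2 * (if i = i0 j then (if decide (c (P j) < 0) = true then (1:ℝ) else -1) else 1) :=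
          Finset.prod_congr rfl fun i _ => hfac i
      _ = 2 ^ N * (if decide (c (P j) < 0) = true then (1:ℝ) else -1) := by
          rw [Finset.prod_mul_distrib, Finset.prod_const]
          simp [Finset.prod_ite_eq']
  -- Step C': terms outside the range of `P` vanish
  have hvanish : ∀ Q : Fin N → Fin 4, Q ∉ Finset.image P Finset.univ →
      c Q * ∏ i, S Q i = 0 := by
    intro Q hQ
    by_cases hc : c Q = 0
    · rw [hc, zero_mul]
    have hnot : ¬(∀ i, Q i ≠ 0 → ∃ j, P j i ≠ 0) := by
      intro h
      obtain ⟨j, hj⟩ := hclosed Q hc h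
      exact hQ (Finset.mem_image.mpr ⟨j, Finset.mem_univ j, hj.symm⟩)
    push_neg at hnot
    obtain ⟨i, hQi, hfree⟩ := hnot
    have : S Q i = 0 := by
      rw [hS_free Q i (by push_neg; exact hfree), if_neg hQi]
    rw [Finset.prod_eq_zero (Finset.mem_univ i) this, mul_zero]
  -- injectivity of `P`
  have hinj : ∀ j k : Fin m, P j = P k → j = k := by
    intro j k hEq
    exact huniq (i0 j) j k (hi0 j) (hEq ▸ hi0 j)
  -- total sum
  have key : ∑ ε : Fin N → Bool, E (fun i => g i (ε i))
      = 2 ^ N * (-∑ j, |c (P j)|) := by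
    rw [swap]
    rw [← Finset.sum_subset (Finset.subset_univ (Finset.image P Finset.univ))
      (fun Q _ hQ => hvanish Q hQ)]
    rw [Finset.sum_image (fun j _ k _ h => hinj j k h)]
    have : ∀ j, c (P j) * ∏ i, S (P j) i = 2 ^ N * (-|c (P j)|) := by
      intro j
      rw [hprodj j, show c (P j) * (2 ^ N * (if decide (c (P j) < 0) = true then (1:ℝ) else -1))
        = 2 ^ N * (c (P j) * (if decide (c (P j) < 0) = true then (1:ℝ) else -1)) by ring,
        hsign j]
    rw [Finset.sum_congr rfl fun j _ => this j, ← Finset.mul_sum, ← Finset.sum_neg_distrib]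
  -- averaging: some sign choice achieves the bound
  have havg : ∃ ε : Fin N → Bool, E (fun i => g i (ε i)) ≤ -∑ j, |c (P j)| := by
    have hcard : (Finset.univ : Finset (Fin N → Bool)).card = 2 ^ N := by
      rw [Finset.card_univ, Fintype.card_fun]
      simp
    by_contra hcon
    push_neg at hcon
    have hlt : ∑ _ε : Fin N → Bool, (-∑ j, |c (P j)|)
        < ∑ ε : Fin N → Bool, E (fun i => g i (ε i)) :=
      Finset.sum_lt_sum_of_nonempty Finset.univ_nonempty fun ε _ => hcon ε
    rw [key, Finset.sum_const, hcard, nsmul_eq_mul] at hlt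
    push_cast at hlt
    exact lt_irrefl _ hlt
  obtain ⟨ε, hε⟩ := havg
  exact ⟨fun i => g i (ε i), by rw [bridge]; exact hε⟩
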